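/- Let θ ∈ ℝ, b ∈ ℝ and u ∈ (0,1). Suppose z_l, z_h ∈ ℝ satisfy z_l < −b/2 < z_h, Φ(z_h + b) − Φ(−z_h) = 1 − u, and Φ(−z_l) − Φ(z_l + b) = 1 − u. If Z is a real random variable with the normal distribution N(θ, 1), then the cumulative distribution function of the FAB p-value U = p(Z,b) at u is given by P( p(Z,b) ≤ u ) = Φ(z_l − θ) + 1 − Φ(z_h − θ). -/

import Mathlib

open MeasureTheory ProbabilityTheory

/-- Φ, the standard normal cumulative distribution function. -/
noncomputable def Phi : ℝ → ℝ := fun x => ProbabilityTheory.cdf (gaussianReal 0 1) x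

/-- The FAB p-value function. -/
noncomputable def fabP (z b : ℝ) : ℝ := 1 - |Phi (z + b) - Phi (-z)|

lemma gaussian_Ioc_pos {x y : ℝ} (h : x < y) : 0 < gaussianReal 0 1 (Set.Ioc x y) := by
  rw [ProbabilityTheory.gaussianReal_apply 0 one_ne_zero _]
  rw [pos_iff_ne_zero]
  intro hc
  rw [MeasureTheory.setLIntegral_eq_zero_iff measurableSet_Ioc
    (measurable_gaussianPDF 0 1)] at hc
  have h2 : ∀ᵐ (t : ℝ), t ∉ Set.Ioc x y := by
    filter_upwards [hc] with t ht hmem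
    exact absurd (ht hmem) (gaussianPDF_pos 0 one_ne_zero t).ne'
  have h3 : (volume : Measure ℝ) (Set.Ioc x y) = 0 :=
    MeasureTheory.measure_eq_zero_iff_ae_notMem.mpr h2
  rw [Real.volume_Ioc] at h3
  rw [ENNReal.ofReal_eq_zero] at h3
  linarith

lemma Phi_strictMono : StrictMono Phi := by
  intro x y hxy
  have h1 : ENNReal.ofReal (Phi x) = gaussianReal 0 1 (Set.Iic x) :=
    ofReal_cdf _ x
  have h2 : ENNReal.ofReal (Phi y) = gaussianReal 0 1 (Set.Iic y) :=
    ofReal_cdf _ y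
  have hsplit : gaussianReal 0 1 (Set.Iic y) =
      gaussianReal 0 1 (Set.Iic x) + gaussianReal 0 1 (Set.Ioc x y) := by
    rw [← measure_union (Set.disjoint_left.mpr fun z hz1 hz2 =>
      absurd (Set.mem_Iic.mp hz1) (not_le.mpr hz2.1)) measurableSet_Ioc]
    rw [Set.Iic_union_Ioc_eq_Iic hxy.le]
  have hpos := gaussian_Ioc_pos hxy
  have hfin : gaussianReal 0 1 (Set.Ioc x y) ≠ ⊤ := measure_ne_top _ _
  have : ENNReal.ofReal (Phi x) < ENNReal.ofReal (Phi y) := by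
    rw [h1, h2, hsplit]
    exact ENNReal.lt_add_right (measure_ne_top _ _) hpos.ne'
  have hx0 : 0 ≤ Phi x := cdf_nonneg _ _
  exact (ENNReal.ofReal_lt_ofReal_iff_of_nonneg hx0).mp this

lemma Phi_nonneg (x : ℝ) : 0 ≤ Phi x := cdf_nonneg _ _
lemma Phi_le_one (x : ℝ) : Phi x ≤ 1 := cdf_le_one _ _

lemma gaussian_Iic (θ x : ℝ) :
    gaussianReal θ 1 (Set.Iic x) = ENNReal.ofReal (Phi (x - θ)) := by
  have hmap : (gaussianReal 0 1).map (· + θ) = gaussianReal θ 1 := by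
    rw [gaussianReal_map_add_const θ, zero_add]
  rw [← hmap, Measure.map_apply (measurable_add_const θ) measurableSet_Iic]
  have : (· + θ) ⁻¹' Set.Iic x = Set.Iic (x - θ) := by
    ext z; simp [le_sub_iff_add_le]
  rw [this, ← ofReal_cdf]
  rfl

lemma gaussian_singleton (θ x : ℝ) : gaussianReal θ 1 {x} = 0 :=
  gaussianReal_absolutelyContinuous θ one_ne_zero (measure_singleton x)

theorem stmt_18 {Ω : Type*} [MeasurableSpace Ω] (P : Measure Ω) [IsProbabilityMeasure P]
    (θ b u zl zh : ℝ) (hu : u ∈ Set.Ioo (0 : ℝ) 1)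
    (hzl : zl < -b / 2) (hzh : -b / 2 < zh)
    (hh : Phi (zh + b) - Phi (-zh) = 1 - u)
    (hl : Phi (-zl) - Phi (zl + b) = 1 - u)
    (Z : Ω → ℝ) (hZ : P.map Z = gaussianReal θ 1) :
    P {ω | fabP (Z ω) b ≤ u} = ENNReal.ofReal (Phi (zl - θ) + 1 - Phi (zh - θ)) := by
  obtain ⟨hu0, hu1⟩ := hu
  -- g is strictly monotone
  set g : ℝ → ℝ := fun z => Phi (z + b) - Phi (-z) with hg
  have hgmono : StrictMono g := by
    intro x y hxy
    have h1 : Phi (x + b) < Phi (y + b) := Phi_strictMono (by linarith)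
    have h2 : Phi (-y) < Phi (-x) := Phi_strictMono (by linarith)
    simp only [hg]; linarith
  -- key equivalence
  have hkey : ∀ z : ℝ, fabP z b ≤ u ↔ (z ≤ zl ∨ zh ≤ z) := by
    intro z
    have h1 : fabP z b ≤ u ↔ 1 - u ≤ |g z| := by
      unfold fabP; constructor <;> intro h <;> [skip; skip] <;> linarith [abs_nonneg (g z)]
    rw [h1, le_abs]
    have hgh : g zh = 1 - u := hh
    have hgl : g zl = -(1 - u) := by simp only [hg]; linarith
    constructor
    · rintro (h | h)
      · right
        by_contra hc
        push_neg at hc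
        have := hgmono hc
        rw [hgh] at this; linarith
      · left
        by_contra hc
        push_neg at hc
        have := hgmono hc
        rw [hgl] at this; linarith
    · rintro (h | h)
      · right
        have := hgmono.monotone h; rw [hgl] at this; linarith
      · left
        have := hgmono.monotone h; rw [hgh] at this; linarith
  -- rewrite the event
  have hset : {ω | fabP (Z ω) b ≤ u} = Z ⁻¹' (Set.Iic zl ∪ Set.Ici zh) := by
    ext ω; simp [hkey, Set.mem_preimage]
  have hZae : AEMeasurable Z P := by
    apply aemeasurable_of_map_neZero
    rw [hZ]; infer_instance
  rw [hset, ← Measure.map_apply_of_aemeasurable hZae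
    ((measurableSet_Iic).union measurableSet_Ici), hZ]
  have hzlzh : zl < zh := lt_trans hzl hzh
  have hdisj : Disjoint (Set.Iic zl) (Set.Ici zh) := by
    rw [Set.disjoint_left]
    intro a ha1 ha2
    simp only [Set.mem_Iic] at ha1
    simp only [Set.mem_Ici] at ha2
    linarith
  rw [measure_union hdisj measurableSet_Ici]
  have hIic : gaussianReal θ 1 (Set.Iic zl) = ENNReal.ofReal (Phi (zl - θ)) :=
    gaussian_Iic θ zl
  have hIci : gaussianReal θ 1 (Set.Ici zh) = ENNReal.ofReal (1 - Phi (zh - θ)) := by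
    have hcompl : Set.Ici zh = (Set.Iio zh)ᶜ := by simp
    rw [hcompl, measure_compl measurableSet_Iio (measure_ne_top _ _), measure_univ]
    have hIio : gaussianReal θ 1 (Set.Iio zh) = gaussianReal θ 1 (Set.Iic zh) :=
      measure_congr (MeasureTheory.Iio_ae_eq_Iic' (gaussian_singleton θ zh))
    rw [hIio, gaussian_Iic θ zh, ← ENNReal.ofReal_one,
      ← ENNReal.ofReal_sub _ (Phi_nonneg _)]
  rw [hIic, hIci, ← ENNReal.ofReal_add (Phi_nonneg _) (by linarith [Phi_le_one (zh - θ)])]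
  ring_nf
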